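/- arXiv:1104.1709 — 2 statements merged into one kernel-verified Lean document; each statement's English description precedes it below -/
import Mathlib

section
/- Let H be a complex Hilbert space, F_1,…,F_N continuous linear functionals on H, v_1,…,v_N complex numbers with V(F,v) = {f ∈ H : F_ν(f) = v_ν for all ν} nonempty, s the unique minimal-norm element of V(F,v), and K ≥ ‖s‖. Then for every g ∈ Q(F,v,K) = V(F,v) ∩ {g ∈ H : ‖g‖ ≤ K} one has ‖s − g‖ ≤ (1/2)·diam Q(F,v,K), where diam denotes the metric diameter of the set. (Corollary 3.1 of the paper: the spline is an optimal approximation in the sense of Golomb and Weinberger.) -/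
open scoped InnerProductSpace

/-- If `s` has minimal norm along the line `s + ℂ • w`, then `⟪s, w⟫ = 0`. -/
lemma spline_orth_aux {H : Type*} [NormedAddCommGroup H] [InnerProductSpace ℂ H]
    (s w : H) (hmin : ∀ t : ℂ, ‖s‖ ≤ ‖s + t • w‖) : ⟪s, w⟫_ℂ = 0 := by
  by_cases hw : w = 0
  · simp [hw]
  set c : ℂ := ⟪s, w⟫_ℂ with hc
  by_contra hne
  have hwpos : (0:ℝ) < ‖w‖^2 := pow_pos (norm_pos_iff.2 hw) 2
  have hcpos : (0:ℝ) < ‖c‖ := norm_pos_iff.2 hne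
  set t : ℂ := -((1 / (‖w‖^2 : ℝ) : ℝ) : ℂ) * (starRingEnd ℂ) c with ht
  have h := hmin t
  have hsq : ‖s + t • w‖^2 = ‖s‖^2 + 2 * Complex.re ⟪s, t • w⟫_ℂ + ‖t • w‖^2 :=
    norm_add_sq (𝕜 := ℂ) s (t • w)
  have h1 : ⟪s, t • w⟫_ℂ = t * c := by
    rw [inner_smul_right]
  have hcc : (starRingEnd ℂ) c * c = ((‖c‖^2 : ℝ) : ℂ) := by
    rw [RCLike.conj_mul]; norm_cast
  have h2 : Complex.re (t * c) = -(1 / ‖w‖^2) * ‖c‖^2 := by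
    have htc : t * c = ((-(1 / ‖w‖^2) * ‖c‖^2 : ℝ) : ℂ) := by
      rw [ht, mul_assoc, hcc]; push_cast; ring
    rw [htc, Complex.ofReal_re]
  have h3 : ‖t • w‖^2 = (1 / ‖w‖^2) * ‖c‖^2 := by
    rw [norm_smul]
    have hT : ‖t‖ = (1 / ‖w‖^2) * ‖c‖ := by
      rw [ht, norm_mul, norm_neg, Complex.norm_real, RCLike.norm_conj, Real.norm_eq_abs,
        abs_of_nonneg (le_of_lt (by positivity : (0:ℝ) < 1 / ‖w‖^2))]
    rw [hT, mul_pow, mul_pow]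
    field_simp
  have hle : ‖s‖^2 ≤ ‖s + t • w‖^2 :=
    pow_le_pow_left₀ (norm_nonneg _) h 2
  rw [hsq, h1, h2, h3] at hle
  nlinarith [hwpos, hcpos, mul_pos (by positivity : (0:ℝ) < 1/‖w‖^2) (by positivity : (0:ℝ) < ‖c‖^2)]

/-- Corollary 3.1, optimality in the sense of Golomb–Weinberger:
for every `g` in `Q(F,v,K) = V(F,v) ∩ {g : ‖g‖ ≤ K}` (with `K ≥ ‖s‖`),
`‖s - g‖ ≤ (1/2) · diam Q(F,v,K)`. -/
theorem spline_optimal_approximation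
    {H : Type*} [NormedAddCommGroup H] [InnerProductSpace ℂ H] [CompleteSpace H]
    {N : ℕ} (F : Fin N → (H →L[ℂ] ℂ)) (v : Fin N → ℂ) (s : H)
    (hsV : ∀ ν, F ν s = v ν)
    (hmin : ∀ g : H, (∀ ν, F ν g = v ν) → ‖s‖ ≤ ‖g‖)
    (K : ℝ) (hK : ‖s‖ ≤ K) :
    ∀ g ∈ {g : H | (∀ ν, F ν g = v ν) ∧ ‖g‖ ≤ K},
      ‖s - g‖ ≤ (1 / 2) * Metric.diam {g : H | (∀ ν, F ν g = v ν) ∧ ‖g‖ ≤ K} := by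
  intro g hg
  obtain ⟨hgV, hgK⟩ := hg
  set w : H := g - s with hw
  -- orthogonality of s to the direction w
  have horth : ⟪s, w⟫_ℂ = 0 := by
    apply spline_orth_aux
    intro t
    apply hmin
    intro ν
    have : F ν (s + t • w) = F ν s + t * (F ν g - F ν s) := by
      simp [hw, mul_sub]
    rw [this, hsV ν, hgV ν]
    ring
  -- the reflected point
  set g' : H := s - w with hg'
  have hg'V : ∀ ν, F ν g' = v ν := by
    intro ν
    have : F ν g' = F ν s - (F ν g - F ν s) := by simp [hg', hw]
    rw [this, hsV ν, hgV ν]; ring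
  have hnorm : ∀ ε : H, ⟪s, ε⟫_ℂ = 0 → ‖s + ε‖^2 = ‖s‖^2 + ‖ε‖^2 := by
    intro ε hε
    have := norm_add_sq (𝕜 := ℂ) s ε
    simpa [hε] using this
  have e1 : ‖g'‖^2 = ‖s‖^2 + ‖w‖^2 := by
    have hz : ⟪s, -w⟫_ℂ = 0 := by simp [horth]
    have := hnorm (-w) hz
    simpa [hg', sub_eq_add_neg] using this
  have e2 : ‖g‖^2 = ‖s‖^2 + ‖w‖^2 := by
    have := hnorm w horth
    have hgsw : g = s + w := by simp [hw]
    rw [hgsw]; exact this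
  have hg'K : ‖g'‖ ≤ K := by
    have heq : ‖g'‖ = ‖g‖ := by
      have := e1.trans e2.symm
      nlinarith [norm_nonneg g', norm_nonneg g]
    rw [heq]; exact hgK
  -- boundedness of Q
  have hbdd : Bornology.IsBounded {g : H | (∀ ν, F ν g = v ν) ∧ ‖g‖ ≤ K} := by
    apply Bornology.IsBounded.subset (Metric.isBounded_closedBall (x := (0:H)) (r := K))
    intro x hx
    simpa [Metric.mem_closedBall, dist_eq_norm] using hx.2
  have hdist : dist g g' ≤ Metric.diam {g : H | (∀ ν, F ν g = v ν) ∧ ‖g‖ ≤ K} :=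
    Metric.dist_le_diam_of_mem hbdd ⟨hgV, hgK⟩ ⟨hg'V, hg'K⟩
  have hrefl : dist g g' = 2 * ‖s - g‖ := by
    rw [dist_eq_norm]
    have h4 : g - g' = (2:ℝ) • (g - s) := by rw [hg', hw]; module
    rw [h4, norm_smul, norm_sub_rev g s]
    norm_num
  rw [hrefl] at hdist
  linarith
end

section
/- Let (λ_j)_{j∈ℕ} be a sequence of nonnegative real numbers, (c_j)_{j∈ℕ} a sequence of complex numbers, and a > 0, s > 0, t ≥ 0 real numbers. Let m = 2^l for some natural number l, and assume Σ_j |c_j|² < ∞ and Σ_j λ_j^{2(ms+t)} |c_j|² < ∞. If Σ_j |c_j|² ≤ a² Σ_j λ_j^{2s} |c_j|², then Σ_j λ_j^{2t} |c_j|² ≤ a^{2m} Σ_j λ_j^{2(ms+t)} |c_j|². (Lemma 4.3 of the paper in Fourier-coefficient form: ‖f‖ ≤ a‖Δ^s f‖ implies ‖Δ^t f‖ ≤ a^m ‖Δ^{ms+t} f‖ for all t ≥ 0 and m = 2^l.) -/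
set_option maxHeartbeats 1000000

/-- Hölder interpolation for weighted square sums. -/
lemma holder_aux (lam : ℕ → ℝ) (hlam : ∀ j, 0 ≤ lam j) (c : ℕ → ℂ) (R θ : ℝ)
    (hθ0 : 0 < θ) (hθ1 : θ < 1)
    (h1 : Summable fun j => ‖c j‖ ^ 2)
    (h2 : Summable fun j => lam j ^ (2 * R) * ‖c j‖ ^ 2) :
    ∑' j, lam j ^ (2 * (θ * R)) * ‖c j‖ ^ 2 ≤
      (∑' j, ‖c j‖ ^ 2) ^ (1 - θ) * (∑' j, lam j ^ (2 * R) * ‖c j‖ ^ 2) ^ θ := by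
  have h1θ : 0 < 1 - θ := by linarith
  have hpq : (1 / (1 - θ)).HolderConjugate (1 / θ) := by
    constructor
    · rw [one_div, one_div, inv_inv, inv_inv, inv_one]; ring
    · positivity
    · positivity
  have hf : ∀ j, 0 ≤ (‖c j‖ ^ 2 : ℝ) ^ (1 - θ) := fun j => Real.rpow_nonneg (by positivity) _
  have hg0 : ∀ j, (0:ℝ) ≤ lam j ^ (2 * R) * ‖c j‖ ^ 2 := fun j =>
    mul_nonneg (Real.rpow_nonneg (hlam j) _) (by positivity)
  have hg : ∀ j, 0 ≤ (lam j ^ (2 * R) * ‖c j‖ ^ 2) ^ θ := fun j => Real.rpow_nonneg (hg0 j) _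
  have hfp : ∀ j, ((‖c j‖ ^ 2 : ℝ) ^ (1 - θ)) ^ (1 / (1 - θ)) = ‖c j‖ ^ 2 := by
    intro j
    rw [← Real.rpow_mul (by positivity), mul_one_div_cancel (ne_of_gt h1θ), Real.rpow_one]
  have hgq : ∀ j, ((lam j ^ (2 * R) * ‖c j‖ ^ 2) ^ θ) ^ (1 / θ)
      = lam j ^ (2 * R) * ‖c j‖ ^ 2 := by
    intro j
    rw [← Real.rpow_mul (hg0 j), mul_one_div_cancel (ne_of_gt hθ0), Real.rpow_one]
  have hfg : ∀ j, (‖c j‖ ^ 2 : ℝ) ^ (1 - θ) * (lam j ^ (2 * R) * ‖c j‖ ^ 2) ^ θ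
      = lam j ^ (2 * (θ * R)) * ‖c j‖ ^ 2 := by
    intro j
    have hcn : (0 : ℝ) ≤ ‖c j‖ ^ 2 := by positivity
    have hsplit : (lam j ^ (2 * R) * ‖c j‖ ^ 2) ^ θ
        = lam j ^ (2 * (θ * R)) * (‖c j‖ ^ 2 : ℝ) ^ θ := by
      rw [Real.mul_rpow (Real.rpow_nonneg (hlam j) _) hcn, ← Real.rpow_mul (hlam j)]
      ring_nf
    have hcomb : (‖c j‖ ^ 2 : ℝ) ^ (1 - θ) * (‖c j‖ ^ 2 : ℝ) ^ θ = ‖c j‖ ^ 2 := by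
      rw [← Real.rpow_add' hcn (by norm_num), sub_add_cancel, Real.rpow_one]
    rw [hsplit]
    calc (‖c j‖ ^ 2 : ℝ) ^ (1 - θ) * (lam j ^ (2 * (θ * R)) * (‖c j‖ ^ 2 : ℝ) ^ θ)
        = lam j ^ (2 * (θ * R)) * ((‖c j‖ ^ 2 : ℝ) ^ (1 - θ) * (‖c j‖ ^ 2 : ℝ) ^ θ) := by ring
      _ = lam j ^ (2 * (θ * R)) * ‖c j‖ ^ 2 := by rw [hcomb]
  have hfsum : Summable fun j => ((‖c j‖ ^ 2 : ℝ) ^ (1 - θ)) ^ (1 / (1 - θ)) :=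
    (summable_congr fun j => by rw [hfp j]).mpr h1
  have hgsum : Summable fun j => ((lam j ^ (2 * R) * ‖c j‖ ^ 2) ^ θ) ^ (1 / θ) :=
    (summable_congr fun j => by rw [hgq j]).mpr h2
  have key := Real.inner_le_Lp_mul_Lq_tsum_of_nonneg hpq hf hg hfsum hgsum
  rw [tsum_congr hfp, tsum_congr hgq, tsum_congr hfg, one_div_one_div, one_div_one_div] at key
  exact key

/-- Lemma 4.3, Fourier form: for `m = 2^l` and `t ≥ 0`, if
`∑ |c_j|² ≤ a² ∑ λ_j^{2s} |c_j|²`, then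
`∑ λ_j^{2t} |c_j|² ≤ a^{2m} ∑ λ_j^{2(ms+t)} |c_j|²`. -/
theorem lemma_4_3
    (lam : ℕ → ℝ) (hlam : ∀ j, 0 ≤ lam j) (c : ℕ → ℂ) (a s t : ℝ)
    (ha : 0 < a) (hs : 0 < s) (ht : 0 ≤ t) (m l : ℕ) (hm : m = 2 ^ l)
    (h1 : Summable fun j => ‖c j‖ ^ 2)
    (h2 : Summable fun j => lam j ^ (2 * ((m : ℝ) * s + t)) * ‖c j‖ ^ 2)
    (hyp : ∑' j, ‖c j‖ ^ 2 ≤ a ^ 2 * ∑' j, lam j ^ (2 * s) * ‖c j‖ ^ 2) :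
    ∑' j, lam j ^ (2 * t) * ‖c j‖ ^ 2 ≤
      a ^ (2 * m) * ∑' j, lam j ^ (2 * ((m : ℝ) * s + t)) * ‖c j‖ ^ 2 := by
  have hm1 : 1 ≤ m := by rw [hm]; exact Nat.one_le_two_pow
  have hmR : (1 : ℝ) ≤ (m : ℝ) := by exact_mod_cast hm1
  set R : ℝ := (m : ℝ) * s + t with hRdef
  have hR : 0 < R := by nlinarith
  set A : ℝ := ∑' j, ‖c j‖ ^ 2 with hAdef
  set T : ℝ := ∑' j, lam j ^ (2 * R) * ‖c j‖ ^ 2 with hTdef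
  have hA0 : 0 ≤ A := tsum_nonneg fun j => by positivity
  have hT0 : 0 ≤ T := tsum_nonneg fun j =>
    mul_nonneg (Real.rpow_nonneg (hlam j) _) (by positivity)
  -- trivial case: all coefficients vanish
  by_cases hAz : A = 0
  · have hc : ∀ j, ‖c j‖ ^ 2 = 0 := fun j =>
      le_antisymm (by calc ‖c j‖ ^ 2 ≤ A := Summable.le_tsum h1 j fun i _ => by positivity
                       _ = 0 := hAz) (by positivity)
    have hL : (∑' j, lam j ^ (2 * t) * ‖c j‖ ^ 2) = 0 := by
      have : ∀ j, lam j ^ (2 * t) * ‖c j‖ ^ 2 = 0 := fun j => by rw [hc j, mul_zero]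
      rw [tsum_congr this, tsum_zero]
    rw [hL]
    exact mul_nonneg (by positivity) hT0
  have hA : 0 < A := lt_of_le_of_ne hA0 (Ne.symm hAz)
  have hsR : s ≤ R := by nlinarith
  by_cases hRs : R = s
  · -- degenerate case m = 1, t = 0
    have hms : ((m : ℝ) - 1) * s + t = 0 := by rw [hRdef] at hRs; nlinarith
    have ht0 : t = 0 := by nlinarith
    have hmr1 : (m : ℝ) = 1 := by
      have h0 : ((m : ℝ) - 1) * s = 0 := by nlinarith
      rcases mul_eq_zero.mp h0 with h | h
      · linarith
      · exact absurd h (ne_of_gt hs)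
    have hmn1 : m = 1 := by exact_mod_cast hmr1
    have hTs : T = ∑' j, lam j ^ (2 * s) * ‖c j‖ ^ 2 := by rw [hTdef, hRs]
    have hB : (∑' j, lam j ^ (2 * t) * ‖c j‖ ^ 2) = A := by
      rw [hAdef, ht0]
      exact tsum_congr fun j => by rw [mul_zero, Real.rpow_zero, one_mul]
    have he : a ^ (2 * 1) * T = a ^ 2 * ∑' j, lam j ^ (2 * s) * ‖c j‖ ^ 2 := by
      rw [hTs]
    rw [hB, hmn1, he]
    exact hyp
  -- main case: s < R
  have hsR' : s < R := lt_of_le_of_ne hsR fun h => hRs h.symm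
  set u : ℝ := s / R with hudef
  have hu0 : 0 < u := div_pos hs hR
  have hu1 : u < 1 := (div_lt_one hR).mpr hsR'
  have huR : u * R = s := div_mul_cancel₀ s (ne_of_gt hR)
  have hS : (∑' j, lam j ^ (2 * s) * ‖c j‖ ^ 2) ≤ A ^ (1 - u) * T ^ u := by
    have h := holder_aux lam hlam c R u hu0 hu1 h1 h2
    rwa [huR] at h
  have step1 : A ^ u ≤ a ^ 2 * T ^ u := by
    have hchain : A ≤ a ^ 2 * (A ^ (1 - u) * T ^ u) :=
      le_trans hyp (mul_le_mul_of_nonneg_left hS (by positivity))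
    have hAsplit : A = A ^ (1 - u) * A ^ u := by
      rw [← Real.rpow_add hA, sub_add_cancel, Real.rpow_one]
    have hX : 0 < A ^ (1 - u) := Real.rpow_pos_of_pos hA _
    have h' : A ^ (1 - u) * A ^ u ≤ A ^ (1 - u) * (a ^ 2 * T ^ u) := by
      calc A ^ (1 - u) * A ^ u = A := hAsplit.symm
        _ ≤ a ^ 2 * (A ^ (1 - u) * T ^ u) := hchain
        _ = A ^ (1 - u) * (a ^ 2 * T ^ u) := by ring
    exact (mul_le_mul_iff_right₀ hX).mp h'
  have hAT : A ≤ (a ^ 2 : ℝ) ^ (1 / u) * T := by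
    have h' : (A ^ u) ^ (1 / u) ≤ (a ^ 2 * T ^ u) ^ (1 / u) :=
      Real.rpow_le_rpow (Real.rpow_nonneg hA0 _) step1 (by positivity)
    rwa [← Real.rpow_mul hA0, mul_one_div_cancel (ne_of_gt hu0), Real.rpow_one,
      Real.mul_rpow (by positivity) (Real.rpow_nonneg hT0 _),
      ← Real.rpow_mul hT0, mul_one_div_cancel (ne_of_gt hu0), Real.rpow_one] at h'
  have hTpos : 0 < T := by
    by_contra h
    push_neg at h
    have hT00 : T = 0 := le_antisymm h hT0
    rw [hT00, mul_zero] at hAT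
    linarith
  have hgoalconst : ∀ e : ℝ, e = (m : ℝ) → (a ^ 2 : ℝ) ^ e = a ^ (2 * m) := by
    intro e he
    rw [he, Real.rpow_natCast, ← pow_mul]
  by_cases ht0 : t = 0
  · have hB : (∑' j, lam j ^ (2 * t) * ‖c j‖ ^ 2) = A := by
      rw [hAdef, ht0]
      exact tsum_congr fun j => by rw [mul_zero, Real.rpow_zero, one_mul]
    have hucomp : 1 / u = (m : ℝ) := by
      rw [hudef, one_div_div, hRdef, ht0, add_zero]
      field_simp
    rw [hB]
    calc A ≤ (a ^ 2 : ℝ) ^ (1 / u) * T := hAT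
      _ = a ^ (2 * m) * T := by rw [hgoalconst (1 / u) hucomp]
  · have htpos : 0 < t := lt_of_le_of_ne ht fun h => ht0 h.symm
    set v : ℝ := t / R with hvdef
    have hv0 : 0 < v := div_pos htpos hR
    have hv1 : v < 1 := by
      rw [hvdef, div_lt_one hR, hRdef]; nlinarith
    have hvR : v * R = t := div_mul_cancel₀ t (ne_of_gt hR)
    have hBle : (∑' j, lam j ^ (2 * t) * ‖c j‖ ^ 2) ≤ A ^ (1 - v) * T ^ v := by
      have h := holder_aux lam hlam c R v hv0 hv1 h1 h2
      rwa [hvR] at h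
    have hexp : (1 / u) * (1 - v) = (m : ℝ) := by
      rw [hudef, hvdef, one_div_div]
      field_simp
      rw [hRdef]; ring
    calc (∑' j, lam j ^ (2 * t) * ‖c j‖ ^ 2)
        ≤ A ^ (1 - v) * T ^ v := hBle
      _ ≤ ((a ^ 2 : ℝ) ^ (1 / u) * T) ^ (1 - v) * T ^ v :=
          mul_le_mul_of_nonneg_right
            (Real.rpow_le_rpow hA0 hAT (by linarith)) (Real.rpow_nonneg hT0 _)
      _ = (a ^ 2 : ℝ) ^ ((1 / u) * (1 - v)) * (T ^ (1 - v) * T ^ v) := by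
          rw [Real.mul_rpow (Real.rpow_nonneg (by positivity) _) hT0,
            ← Real.rpow_mul (by positivity)]
          ring
      _ = a ^ (2 * m) * T := by
          rw [hgoalconst _ hexp, ← Real.rpow_add hTpos, sub_add_cancel, Real.rpow_one]
end
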